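/- Let F : ℝ^d → ℝ be convex with nonempty compact optimal set Ω_* and optimal value F_*. For ε > 0 define B_ε = max over w in the level set {w : F(w) = F_* + ε} of dist(w, Ω_*). Then the function ε ↦ B_ε/ε is monotonically non-increasing: if 0 < ε < ε', then B_{ε'}/ε' ≤ B_ε/ε. -/

import Mathlib

theorem stmt_1 (d : ℕ) (F : EuclideanSpace ℝ (Fin d) → ℝ)
    (hF : ConvexOn ℝ Set.univ F)
    (Ωstar : Set (EuclideanSpace ℝ (Fin d)))
    (hΩstar : Ωstar = {w | ∀ v, F w ≤ F v}) (hne : Ωstar.Nonempty)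
    (hconv : Convex ℝ Ωstar) (hcomp : IsCompact Ωstar)
    (Fstar : ℝ) (hFstar : ∀ w ∈ Ωstar, F w = Fstar)
    (ε ε' Bε Bε' : ℝ) (hε : 0 < ε) (hεε' : ε < ε')
    (hBε : IsGreatest ((fun w => Metric.infDist w Ωstar) '' {w | F w = Fstar + ε}) Bε)
    (hBε' : IsGreatest ((fun w => Metric.infDist w Ωstar) '' {w | F w = Fstar + ε'}) Bε')
    (hBpos : 0 < Bε) :
    Bε' / ε' ≤ Bε / ε := by
  have hε' : (0:ℝ) < ε' := hε.trans hεε'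
  -- maximizer w' on the ε' level set
  obtain ⟨w', hw', hdw'⟩ := hBε'.1
  simp only [Set.mem_setOf_eq] at hw'
  -- projection point p
  obtain ⟨p, hpΩ, hpd⟩ := hcomp.exists_infDist_eq_dist hne w'
  have hFp : F p = Fstar := hFstar p hpΩ
  have hBε'nn : 0 ≤ Bε' := by rw [← hdw']; exact Metric.infDist_nonneg
  -- continuity of F
  have hcont : Continuous F := by
    rw [← continuousOn_univ]
    exact hF.continuousOn isOpen_univ
  -- path
  set γ : ℝ → EuclideanSpace ℝ (Fin d) := fun s => (1 - s) • p + s • w' with hγ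
  have hγcont : Continuous (F ∘ γ) := by
    have : Continuous γ :=
      ((continuous_const.sub continuous_id).smul continuous_const).add
        (continuous_id.smul continuous_const)
    exact hcont.comp this
  set t0 : ℝ := ε / ε' with ht0
  have ht0pos : 0 < t0 := div_pos hε hε'
  have ht0lt : t0 < 1 := (div_lt_one hε').mpr hεε'
  have hFt0 : F (γ t0) ≤ Fstar + ε := by
    have := hF.2 (Set.mem_univ p) (Set.mem_univ w') (by linarith) (le_of_lt ht0pos)
      (by ring : (1 - t0) + t0 = 1)
    calc F (γ t0) ≤ (1 - t0) * F p + t0 * F w' := this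
      _ = Fstar + t0 * ε' := by rw [hFp, hw']; ring
      _ = Fstar + ε := by rw [ht0]; field_simp
  have hF1 : Fstar + ε ≤ F (γ 1) := by
    have : γ 1 = w' := by simp [hγ]
    rw [this, hw']; linarith
  -- IVT
  obtain ⟨s, hsmem, hFs⟩ := intermediate_value_Icc ht0lt.le (hγcont.continuousOn)
    (Set.mem_Icc.mpr ⟨hFt0, hF1⟩)
  obtain ⟨hs0, hs1⟩ := hsmem
  -- infDist (γ s) ≤ Bε
  have hγsBε : Metric.infDist (γ s) Ωstar ≤ Bε :=
    hBε.2 ⟨γ s, hFs, rfl⟩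
  -- dist w' (γ s) = (1 - s) * dist w' p
  have hdist : dist w' (γ s) = (1 - s) * dist w' p := by
    have h1 : w' - γ s = (1 - s) • (w' - p) := by
      simp only [hγ]
      module
    rw [dist_eq_norm, h1, norm_smul, dist_eq_norm]
    rw [Real.norm_eq_abs, abs_of_nonneg (by linarith)]
  -- lower bound
  have hdw'' : Metric.infDist w' Ωstar = Bε' := hdw'
  have hdp : dist w' p = Bε' := by rw [← hpd]; exact hdw''
  have hlow : s * Bε' ≤ Metric.infDist (γ s) Ωstar := by
    have htri : Metric.infDist w' Ωstar ≤ Metric.infDist (γ s) Ωstar + dist w' (γ s) :=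
      Metric.infDist_le_infDist_add_dist
    rw [hdw'', hdist, hdp] at htri
    nlinarith
  have key : (ε / ε') * Bε' ≤ Bε := by
    have h1 : (ε / ε') * Bε' ≤ s * Bε' := mul_le_mul_of_nonneg_right hs0 hBε'nn
    linarith
  rw [div_le_div_iff₀ hε' hε]
  have key2 : ε / ε' * Bε' * ε' ≤ Bε * ε' := mul_le_mul_of_nonneg_right key hε'.le
  have heq : ε / ε' * Bε' * ε' = Bε' * ε := by field_simp
  linarith
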